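/- Let G be a group and H a subgroup of G. Then H is fully invariant in G (i.e., H.map φ ≤ H for every group homomorphism φ : G →* G) if and only if there exist a functor U : Grp ⥤ Grp and a natural transformation π : 𝟭 Grp ⟶ U such that H equals the kernel of the underlying group homomorphism of the component π.app G : G ⟶ U.obj G. -/

import Mathlib

open CategoryTheory

variable (G : GrpCat) (H : Subgroup G)

def NN (K : GrpCat) : Subgroup K :=
  Subgroup.normalClosure (⋃ φ : G →* K, (H.map φ : Set K))

instance (K : GrpCat) : (NN G H K).Normal := Subgroup.normalClosure_normal

lemma NN_le {K : GrpCat} {N : Subgroup K} [N.Normal]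
    (h : ∀ φ : G →* K, H.map φ ≤ N) : NN G H K ≤ N := by
  apply Subgroup.normalClosure_le_normal
  rintro x hx
  simp only [Set.mem_iUnion] at hx
  obtain ⟨φ, hφ⟩ := hx
  exact h φ hφ

lemma le_NN {K : GrpCat} (φ : G →* K) : H.map φ ≤ NN G H K := by
  intro x hx
  exact Subgroup.subset_normalClosure (Set.mem_iUnion.2 ⟨φ, hx⟩)

lemma NN_comap {K L : GrpCat} (f : K ⟶ L) : NN G H K ≤ (NN G H L).comap f.hom := by
  haveI : ((NN G H L).comap f.hom).Normal := Subgroup.Normal.comap inferInstance f.hom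
  apply NN_le
  intro φ
  rw [← Subgroup.map_le_iff_le_comap, Subgroup.map_map]
  exact le_NN G H (f.hom.comp φ)

def Ufun : GrpCat ⥤ GrpCat where
  obj K := GrpCat.of (K ⧸ NN G H K)
  map {K L} f := GrpCat.ofHom (QuotientGroup.map _ _ f.hom (NN_comap G H f))
  map_id K := by
    ext x
    rfl
  map_comp {K L M} f g := by
    ext x
    rfl

def piNat : 𝟭 GrpCat ⟶ Ufun G H where
  app K := GrpCat.ofHom (QuotientGroup.mk' (NN G H K))
  naturality {K L} f := by
    ext x; rfl

theorem fullyInvariant_iff_unit_kernel (G : GrpCat) (H : Subgroup G) :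
    (∀ φ : G →* G, H.map φ ≤ H) ↔
      ∃ (U : GrpCat ⥤ GrpCat) (π : 𝟭 GrpCat ⟶ U),
        H = MonoidHom.ker (π.app G).hom := by
  constructor
  · intro hfi
    haveI : H.Normal := by
      constructor
      intro n hn g
      have := hfi (MulAut.conj g).toMonoidHom ⟨n, hn, rfl⟩
      simpa using this
    refine ⟨Ufun G H, piNat G H, ?_⟩
    have : MonoidHom.ker ((piNat G H).app G).hom = NN G H G := by
      exact QuotientGroup.ker_mk' (NN G H G)
    rw [this]
    apply le_antisymm
    · simpa using le_NN G H (MonoidHom.id G)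
    · exact NN_le G H hfi
  · rintro ⟨U, π, rfl⟩
    intro φ
    rintro x ⟨y, hy, rfl⟩
    have hnat := π.naturality (GrpCat.ofHom φ)
    have h3 : (π.app G).hom.comp φ = (U.map (GrpCat.ofHom φ)).hom.comp (π.app G).hom := congrArg GrpCat.Hom.hom hnat
    have h2 := DFunLike.congr_fun h3 y
    simp only [MonoidHom.mem_ker, SetLike.mem_coe] at hy ⊢
    rw [MonoidHom.comp_apply, MonoidHom.comp_apply, hy, map_one] at h2
    exact h2
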